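/- Let F be a finite field and G a finite abelian group. If every nontrivial ideal I of the group ring FG (i.e. {0} ⊊ I ⊊ FG) is the annihilator of some single element v ∈ FG, then FG is a principal ideal ring. -/

import Mathlib

open Module LinearMap

section Aux
variable {F G : Type*} [Field F] [CommGroup G] [Fintype G]

noncomputable instance fdInst : FiniteDimensional F (MonoidAlgebra F G) :=
  Module.Finite.of_basis (MonoidAlgebra.basis G F : Basis G F (MonoidAlgebra F G))

/-- The Frobenius pairing map x ↦ (y ↦ (x*y) 1). -/
noncomputable def frobPhi : MonoidAlgebra F G →ₗ[F] Module.Dual F (MonoidAlgebra F G) where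
  toFun x :=
    { toFun := fun y => (x * y).coeff 1
      map_add' := fun a b => by
        show (x * (a + b)).coeff 1 = (x * a).coeff 1 + (x * b).coeff 1
        rw [mul_add]; rfl
      map_smul' := fun c a => by
        show (x * (c • a)).coeff 1 = c • (x * a).coeff 1
        rw [mul_smul_comm]; rfl }
  map_add' a b := by
    refine LinearMap.ext fun y => ?_
    show ((a + b) * y).coeff 1 = (a * y).coeff 1 + (b * y).coeff 1
    rw [add_mul]; rfl
  map_smul' c a := by
    refine LinearMap.ext fun y => ?_
    show ((c • a) * y).coeff 1 = c • (a * y).coeff 1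
    rw [smul_mul_assoc]; rfl

omit [Fintype G] in
lemma frobPhi_apply (x y : MonoidAlgebra F G) : frobPhi x y = (x * y).coeff 1 := rfl

omit [Fintype G] in
lemma frobPhi_injective : Function.Injective (frobPhi (F := F) (G := G)) := by
  rw [injective_iff_map_eq_zero]
  intro x hx
  ext g
  have := congrArg (fun ξ => ξ (MonoidAlgebra.single g⁻¹ (1 : F))) hx
  simpa [frobPhi_apply, MonoidAlgebra.mul_single_apply] using this

end Aux

section Aux2
variable {F G : Type*} [Field F] [CommGroup G] [Fintype G]

lemma frobPhi_surjective : Function.Surjective (frobPhi (F := F) (G := G)) := by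
  have h1 : Function.Injective (frobPhi (F := F) (G := G)) := frobPhi_injective
  rw [← LinearMap.range_eq_top]
  have : finrank F (LinearMap.range (frobPhi (F := F) (G := G))) =
      finrank F (Module.Dual F (MonoidAlgebra F G)) := by
    rw [LinearMap.finrank_range_of_inj h1, Subspace.dual_finrank_eq]
  exact Submodule.eq_top_of_finrank_eq this

/-- The image of the annihilator of an ideal under frobPhi is the dual annihilator. -/
lemma map_frobPhi_annihilator (W : Ideal (MonoidAlgebra F G)) :
    Submodule.map frobPhi (W.annihilator.restrictScalars F) =
      (W.restrictScalars F).dualAnnihilator := by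
  ext ξ
  constructor
  · rintro ⟨x, hx, rfl⟩
    rw [Submodule.mem_dualAnnihilator]
    intro w hw
    have h0 : x * w = 0 := by
      simpa using Submodule.mem_annihilator.mp hx w hw
    show (x * w).coeff 1 = 0
    rw [h0]; rfl
  · intro hξ
    obtain ⟨x, rfl⟩ := frobPhi_surjective ξ
    rw [Submodule.mem_dualAnnihilator] at hξ
    refine ⟨x, ?_, rfl⟩
    show x ∈ W.annihilator
    rw [Submodule.mem_annihilator]
    intro w hw
    have : frobPhi (x * w) = 0 := by
      refine LinearMap.ext fun y => ?_
      have : (x * w) * y = x * (w * y) := mul_assoc _ _ _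
      show ((x * w) * y).coeff 1 = 0
      rw [this]
      exact hξ (w * y) (Ideal.mul_mem_right y W hw)
    simpa using frobPhi_injective (by simpa using this)

lemma finrank_annihilator_add (W : Ideal (MonoidAlgebra F G)) :
    finrank F (W.annihilator.restrictScalars F) + finrank F (W.restrictScalars F) =
      finrank F (MonoidAlgebra F G) := by
  have h1 : finrank F (W.annihilator.restrictScalars F) =
      finrank F ((W.restrictScalars F).dualAnnihilator) := by
    rw [← map_frobPhi_annihilator W]
    have e : MonoidAlgebra F G ≃ₗ[F] Module.Dual F (MonoidAlgebra F G) :=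
      LinearEquiv.ofBijective frobPhi ⟨frobPhi_injective, frobPhi_surjective⟩
    calc finrank F (W.annihilator.restrictScalars F)
        = finrank F ((W.annihilator.restrictScalars F).map
            ((LinearEquiv.ofBijective frobPhi
              ⟨frobPhi_injective, frobPhi_surjective⟩ :
                MonoidAlgebra F G ≃ₗ[F] Module.Dual F (MonoidAlgebra F G)) :
                  MonoidAlgebra F G →ₗ[F] Module.Dual F (MonoidAlgebra F G))) :=
          (LinearEquiv.finrank_map_eq _ _).symm
      _ = _ := rfl
  have h2 : finrank F (MonoidAlgebra F G ⧸ (W.restrictScalars F)) =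
      finrank F ((W.restrictScalars F).dualAnnihilator) :=
    LinearEquiv.finrank_eq (Subspace.quotEquivAnnihilator _)
  have h3 := Submodule.finrank_quotient_add_finrank (W.restrictScalars F)
  omega

end Aux2

theorem stmt_0 (F G : Type*) [Field F] [Fintype F] [CommGroup G] [Fintype G]
    (h : ∀ I : Ideal (MonoidAlgebra F G), I ≠ ⊥ → I ≠ ⊤ →
      ∃ v : MonoidAlgebra F G, ∀ x : MonoidAlgebra F G, x ∈ I ↔ x * v = 0) :
    IsPrincipalIdealRing (MonoidAlgebra F G) := by
  constructor
  intro J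
  by_cases hJbot : J = ⊥
  · exact ⟨⟨0, hJbot.trans (Ideal.span_singleton_eq_bot.mpr rfl).symm⟩⟩
  by_cases hJtop : J = ⊤
  · exact ⟨⟨1, by simp [hJtop, Ideal.span_singleton_one]⟩⟩
  set I : Ideal (MonoidAlgebra F G) := J.annihilator with hI
  have hItop : I ≠ ⊤ := by
    intro htop
    apply hJbot
    rw [Ideal.eq_top_iff_one] at htop
    have h1 := Submodule.mem_annihilator.mp htop
    ext j
    simp only [Ideal.mem_bot]
    constructor
    · intro hj; simpa using h1 j hj
    · rintro rfl; exact J.zero_mem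
  have hJtop' : (J.restrictScalars F : Submodule F (MonoidAlgebra F G)) ≠ ⊤ := by
    intro ht
    apply hJtop
    rw [Ideal.eq_top_iff_one]
    have : (1 : MonoidAlgebra F G) ∈ (J.restrictScalars F) := ht ▸ Submodule.mem_top
    exact this
  have hJlt : finrank F (J.restrictScalars F) < finrank F (MonoidAlgebra F G) :=
    Submodule.finrank_lt hJtop'
  have hsum1 := finrank_annihilator_add (F := F) (G := G) J
  have hIbot : I ≠ ⊥ := by
    intro hb
    have hz : finrank F ((I : Ideal (MonoidAlgebra F G)).restrictScalars F) = 0 := by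
      rw [hb]
      simp [finrank_bot]
      exact finrank_bot _ _
    rw [← hI] at hsum1
    omega
  obtain ⟨v, hv⟩ := h I hIbot hItop
  have hker : ((I : Ideal (MonoidAlgebra F G)).restrictScalars F : Submodule F (MonoidAlgebra F G)) =
      LinearMap.ker (LinearMap.mulRight F v) := by
    ext x
    simp [hv x, LinearMap.mem_ker]
  have hrange : LinearMap.range (LinearMap.mulRight F v) =
      ((Ideal.span {v} : Ideal (MonoidAlgebra F G)).restrictScalars F) := by
    ext x
    simp only [LinearMap.mem_range, LinearMap.mulRight_apply, Submodule.restrictScalars_mem,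
      Ideal.mem_span_singleton']
  have hrn := LinearMap.finrank_range_add_finrank_ker (LinearMap.mulRight F v)
  rw [hrange, ← hker] at hrn
  have hvmem : v ∈ (I : Ideal (MonoidAlgebra F G)).annihilator := by
    rw [Submodule.mem_annihilator]
    intro x hx
    have hxv : x * v = 0 := (hv x).mp hx
    simpa [smul_eq_mul, mul_comm] using hxv
  have hspan_le : (Ideal.span {v} : Ideal (MonoidAlgebra F G)) ≤ I.annihilator :=
    (Ideal.span_singleton_le_iff_mem _).mpr hvmem
  have hJle : J ≤ (I : Ideal (MonoidAlgebra F G)).annihilator := by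
    intro j hj
    rw [Submodule.mem_annihilator]
    intro x hx
    have hx' := Submodule.mem_annihilator.mp hx j hj
    simpa [smul_eq_mul, mul_comm] using hx'
  have hsum2 := finrank_annihilator_add (F := F) (G := G) I
  rw [← hI] at hsum1
  have e1 : finrank F ((J : Ideal (MonoidAlgebra F G)).restrictScalars F) =
      finrank F (((I : Ideal (MonoidAlgebra F G)).annihilator).restrictScalars F) := by omega
  have e2 : finrank F (((Ideal.span {v} : Ideal (MonoidAlgebra F G))).restrictScalars F) =
      finrank F (((I : Ideal (MonoidAlgebra F G)).annihilator).restrictScalars F) := by omega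
  have h1 : ((Ideal.span {v} : Ideal (MonoidAlgebra F G))).restrictScalars F =
      ((I : Ideal (MonoidAlgebra F G)).annihilator).restrictScalars F :=
    Submodule.eq_of_le_of_finrank_eq (fun x hx => hspan_le hx) e2
  have h2 : (J : Ideal (MonoidAlgebra F G)).restrictScalars F =
      ((I : Ideal (MonoidAlgebra F G)).annihilator).restrictScalars F :=
    Submodule.eq_of_le_of_finrank_eq (fun x hx => hJle hx) e1
  have : J = Ideal.span {v} :=
    Submodule.restrictScalars_injective F _ _ (h2.trans h1.symm)
  exact ⟨⟨v, this⟩⟩
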